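/- Let n ≥ 3 and let g₁, g₂ be two-qubit unitaries in the Clifford group 𝒞₂. Suppose the 2n-qubit unitary that applies g₁ to qubits (1, n+1) (the two qubits of node 1), g₂ to qubits (2, n+2) (the two qubits of node 2), and identity elsewhere is GHZ-preserving. Then there exist a, b, c ∈ {0,1}, two-qubit Pauli strings Q₁, Q₂, and unit complex scalars λ₁, λ₂ such that g₁ = λ₁ Q₁ · CZ^a (S^b ⊗ S^c) and g₂ = λ₂ Q₂ · CZ^a (S^b ⊗ S^c) with the same exponents a, b, c. In particular, up to phases and Pauli factors the two bilocally applied gates must be identical and must belong to the group generated by CZ and the phase gates. -/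

import Mathlib

noncomputable section

/-- The state space of a register of qubits indexed by `ι`: `(ℂ²)^{⊗ι}`. -/
abbrev QState (ι : Type) : Type := (ι → Fin 2) → ℂ

/-- Operators (matrices) on the state space of qubits indexed by `ι`. -/
abbrev QOp (ι : Type) : Type := Matrix (ι → Fin 2) (ι → Fin 2) ℂ

def pI : Matrix (Fin 2) (Fin 2) ℂ := 1

def pX : Matrix (Fin 2) (Fin 2) ℂ := !![0, 1; 1, 0]

def pY : Matrix (Fin 2) (Fin 2) ℂ := !![0, -Complex.I; Complex.I, 0]

def pZ : Matrix (Fin 2) (Fin 2) ℂ := !![1, 0; 0, -1]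

/-- The single-qubit phase gate `S = diag(1, i)`. -/
def sGate : Matrix (Fin 2) (Fin 2) ℂ := !![1, 0; 0, Complex.I]

def pauliSet : Set (Matrix (Fin 2) (Fin 2) ℂ) := {pI, pX, pY, pZ}

/-- The `n`-qubit GHZ state `(|0…0⟩ + |1…1⟩)/√2`. -/
def ghz (n : ℕ) : QState (Fin n) := fun f =>
  (Real.sqrt 2 : ℂ)⁻¹ *
    ((if f = (fun _ => (0 : Fin 2)) then 1 else 0) +
     (if f = (fun _ => (1 : Fin 2)) then 1 else 0))

/-- A single-qubit operator embedded at position `k` (identity elsewhere). -/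
def embed1 {ι : Type} [Fintype ι] [DecidableEq ι] (k : ι)
    (A : Matrix (Fin 2) (Fin 2) ℂ) : QOp ι := fun f g =>
  A (f k) (g k) * ∏ i ∈ Finset.univ.erase k, (if f i = g i then (1 : ℂ) else 0)

/-- Kronecker product of a family of single-qubit operators. -/
def kron {ι : Type} [Fintype ι] (P : ι → Matrix (Fin 2) (Fin 2) ℂ) : QOp ι :=
  fun f g => ∏ i, P i (f i) (g i)

/-- `M` is a Pauli string: a Kronecker product of Pauli matrices. -/
def IsPauliString {ι : Type} [Fintype ι] (M : QOp ι) : Prop :=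
  ∃ P : ι → Matrix (Fin 2) (Fin 2) ℂ, (∀ i, P i ∈ pauliSet) ∧ M = kron P

/-- `v` is a GHZ-basis state: the image of the GHZ state under a Pauli string. -/
def IsGHZBasis {n : ℕ} (v : QState (Fin n)) : Prop :=
  ∃ M : QOp (Fin n), IsPauliString M ∧ v = M.mulVec (ghz n)

/-- Inner product. -/
def qinner {ι : Type} [Fintype ι] [DecidableEq ι] (u v : QState ι) : ℂ :=
  ∑ f, star (u f) * v f

/-- Tensor product of two states of an `n`-qubit register, giving a state of the
`2n`-qubit system (copy 1 indexed by `Sum.inl`, copy 2 by `Sum.inr`). -/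
def tensor2 {n : ℕ} (u v : QState (Fin n)) : QState (Fin n ⊕ Fin n) :=
  fun f => u (fun i => f (Sum.inl i)) * v (fun i => f (Sum.inr i))

/-- A `2n`-qubit operator is GHZ-preserving if it maps any tensor product of two
GHZ-basis states to a unit scalar multiple of a tensor product of GHZ-basis states. -/
def GHZPreserving2 {n : ℕ} (U : QOp (Fin n ⊕ Fin n)) : Prop :=
  ∀ u v : QState (Fin n), IsGHZBasis u → IsGHZBasis v →
    ∃ u' v' : QState (Fin n), IsGHZBasis u' ∧ IsGHZBasis v' ∧
      ∃ lam : ℂ, ‖lam‖ = 1 ∧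
        U.mulVec (tensor2 u v) = lam • tensor2 u' v'

/-- Controlled-Z gate between qubits `p` and `q` (identity elsewhere). -/
def czMat {ι : Type} [Fintype ι] [DecidableEq ι] (p q : ι) : QOp ι :=
  Matrix.diagonal fun f => if f p = 1 ∧ f q = 1 then (-1 : ℂ) else 1

/-- Phase gate `S` on qubit `p` (identity elsewhere). -/
def sMat {ι : Type} [Fintype ι] [DecidableEq ι] (p : ι) : QOp ι :=
  Matrix.diagonal fun f => if f p = 1 then Complex.I else 1

/-- B-generator `CZ_{i,n+i} · CZ_{j,n+j}` on the two-copy system. -/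
def bCZ {n : ℕ} (i j : Fin n) : QOp (Fin n ⊕ Fin n) :=
  czMat (Sum.inl i : Fin n ⊕ Fin n) (Sum.inr i) *
    czMat (Sum.inl j : Fin n ⊕ Fin n) (Sum.inr j)

/-- B-generator `S_i · S_j` (phase gates on copy 1). -/
def bS₁ {n : ℕ} (i j : Fin n) : QOp (Fin n ⊕ Fin n) :=
  sMat (Sum.inl i : Fin n ⊕ Fin n) * sMat (Sum.inl j : Fin n ⊕ Fin n)

/-- B-generator `S_{n+i} · S_{n+j}` (phase gates on copy 2). -/
def bS₂ {n : ℕ} (i j : Fin n) : QOp (Fin n ⊕ Fin n) :=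
  sMat (Sum.inr i : Fin n ⊕ Fin n) * sMat (Sum.inr j : Fin n ⊕ Fin n)

/-- H-generator `C₁ = ∏_{i=1}^n CNOT_{i → n+i}` (controls on copy 1, targets on copy 2). -/
def hC₁ (n : ℕ) : QOp (Fin n ⊕ Fin n) := fun f g =>
  if f = Sum.elim (fun i => g (Sum.inl i)) (fun i => g (Sum.inr i) + g (Sum.inl i))
  then 1 else 0

/-- H-generator `C₂ = ∏_{i=1}^n CNOT_{n+i → i}` (controls on copy 2, targets on copy 1). -/
def hC₂ (n : ℕ) : QOp (Fin n ⊕ Fin n) := fun f g =>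
  if f = Sum.elim (fun i => g (Sum.inl i) + g (Sum.inr i)) (fun i => g (Sum.inr i))
  then 1 else 0


/-- Kronecker product of two single-qubit operators, as a two-qubit operator. -/
def kron2 (A B : Matrix (Fin 2) (Fin 2) ℂ) :
    Matrix (Fin 2 × Fin 2) (Fin 2 × Fin 2) ℂ :=
  fun p q => A p.1 q.1 * B p.2 q.2

/-- The two-qubit Pauli group: matrices `λ(P⊗Q)` with `λ ∈ {1,-1,i,-i}`. -/
def Pauli2Set : Set (Matrix (Fin 2 × Fin 2) (Fin 2 × Fin 2) ℂ) :=
  {M | ∃ lam : ℂ, lam ∈ ({1, -1, Complex.I, -Complex.I} : Set ℂ) ∧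
    ∃ P ∈ pauliSet, ∃ Q ∈ pauliSet, M = lam • kron2 P Q}

/-- Membership in the two-qubit Clifford group `𝒞₂`. -/
def IsClifford2 (A : Matrix (Fin 2 × Fin 2) (Fin 2 × Fin 2) ℂ) : Prop :=
  A ∈ Matrix.unitaryGroup (Fin 2 × Fin 2) ℂ ∧
    (fun M => A * M * A⁻¹) '' Pauli2Set = Pauli2Set

/-- The two-qubit controlled-Z gate `diag(1,1,1,-1)`. -/
def cz2 : Matrix (Fin 2 × Fin 2) (Fin 2 × Fin 2) ℂ :=
  Matrix.diagonal fun p => if p.1 = 1 ∧ p.2 = 1 then (-1 : ℂ) else 1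

/-- A two-qubit operator embedded at the (distinct) qubits `p, q` of the register
indexed by `ι` (identity elsewhere). -/
def embed2 {ι : Type} [Fintype ι] [DecidableEq ι] (p q : ι)
    (A : Matrix (Fin 2 × Fin 2) (Fin 2 × Fin 2) ℂ) : QOp ι := fun f g =>
  A (f p, f q) (g p, g q) *
    ∏ i ∈ (Finset.univ.erase p).erase q, (if f i = g i then (1 : ℂ) else 0)

/-! ### Auxiliary lemmas -/

/-- fourth roots of unity -/
def IsU4 (z : ℂ) : Prop := z = 1 ∨ z = -1 ∨ z = Complex.I ∨ z = -Complex.I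

lemma IsU4.abs {z : ℂ} (h : IsU4 z) : ‖z‖ = 1 := by
  rcases h with rfl | rfl | rfl | rfl <;> simp

lemma IsU4.ne_zero {z : ℂ} (h : IsU4 z) : z ≠ 0 := by
  intro h0; have := h.abs; rw [h0] at this; simp at this

lemma IsU4.mul {z w : ℂ} (hz : IsU4 z) (hw : IsU4 w) : IsU4 (z * w) := by
  rcases hz with rfl | rfl | rfl | rfl <;> rcases hw with rfl | rfl | rfl | rfl <;>
    simp [IsU4, Complex.I_mul_I]

/-- structure of a Pauli matrix: a flip bit `t` and column phases `π`. -/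
lemma pauli_data {P : Matrix (Fin 2) (Fin 2) ℂ} (hP : P ∈ pauliSet) :
    ∃ t : Fin 2, ∃ pi : Fin 2 → ℂ, IsU4 (pi 0) ∧ (pi 1 = pi 0 ∨ pi 1 = -pi 0) ∧
      ∀ u v : Fin 2, P u v = if u = v + t then pi v else 0 := by
  rcases hP with rfl | rfl | rfl | rfl
  · exact ⟨0, fun _ => 1, Or.inl rfl, Or.inl rfl, by intro u v; fin_cases u <;> fin_cases v <;> simp [pI, Matrix.one_apply]⟩
  · refine ⟨1, fun _ => 1, Or.inl rfl, Or.inl rfl, ?_⟩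
    intro u v; fin_cases u <;> fin_cases v <;> simp [pX]
  · refine ⟨1, fun v => if v = 1 then -Complex.I else Complex.I,
      Or.inr (Or.inr (Or.inl rfl)), Or.inr (by simp), ?_⟩
    intro u v; fin_cases u <;> fin_cases v <;> simp [pY]
  · refine ⟨0, fun v => if v = 1 then -1 else 1, Or.inl rfl, Or.inr (by simp), ?_⟩
    intro u v; fin_cases u <;> fin_cases v <;> simp [pZ]

lemma fin2_cases (z : Fin 2) : z = 0 ∨ z = 1 := by omega

/-- evaluation point on one copy: qubit 0 ↦ a, qubit 1 ↦ b, rest ↦ x. -/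
def qf {n : ℕ} (a b x : Fin 2) : Fin n → Fin 2 :=
  fun i => if i.val = 0 then a else if i.val = 1 then b else x

lemma prod_pm {ι : Type*} (s : Finset ι) (f g : ι → ℂ)
    (h : ∀ i ∈ s, f i = g i ∨ f i = -g i) :
    (∏ i ∈ s, f i) = (∏ i ∈ s, g i) ∨ (∏ i ∈ s, f i) = -∏ i ∈ s, g i := by
  induction s using Finset.cons_induction with
  | empty => simp
  | cons a s ha ih =>
    rcases ih (fun i hi => h i (Finset.mem_cons.mpr (Or.inr hi))) with h2 | h2 <;>
      rcases h a (Finset.mem_cons_self a s) with h1 | h1 <;>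
        rw [Finset.prod_cons, Finset.prod_cons, h1, h2] <;> [left; right; right; left] <;> ring

lemma ghz_basis_eval {n : ℕ} (hn : 3 ≤ n) {v : QState (Fin n)} (hv : IsGHZBasis v) :
    (∀ a b x : Fin 2, v (qf a b x) = 0) ∨
    ∃ s₁ s₂ : Fin 2, ∃ Φ : Fin 2 → ℂ,
      (∀ x, ‖Φ x‖ = 1) ∧ (Φ 1 = Φ 0 ∨ Φ 1 = -Φ 0) ∧
      ∀ a b x : Fin 2, v (qf a b x) =
        (Real.sqrt 2 : ℂ)⁻¹ * (Φ x *
          ((if a = x + s₁ then 1 else 0) * (if b = x + s₂ then 1 else 0))) := by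
  obtain ⟨M, ⟨P, hPmem, rfl⟩, rfl⟩ := hv
  -- value formula
  have hne : (fun _ : Fin n => (0 : Fin 2)) ≠ fun _ => 1 := by
    intro h
    have := congrFun h ⟨0, by linarith⟩
    exact absurd this (by decide)
  have hval : ∀ hf : Fin n → Fin 2, (kron P).mulVec (ghz n) hf =
      (Real.sqrt 2 : ℂ)⁻¹ * ((∏ i, P i (hf i) 0) + ∏ i, P i (hf i) 1) := by
    intro hf
    have hterm : ∀ g : Fin n → Fin 2, kron P hf g * ghz n g =
        (Real.sqrt 2 : ℂ)⁻¹ *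
          ((if g = (fun _ => 0) then ∏ i, P i (hf i) 0 else 0)
            + (if g = (fun _ => 1) then ∏ i, P i (hf i) 1 else 0)) := by
      intro g
      by_cases h0 : g = fun _ => 0
      · subst h0; simp [ghz, kron, hne]; ring
      · by_cases h1 : g = fun _ => 1
        · subst h1; simp [ghz, kron, hne.symm, h0]; ring
        · simp [ghz, kron, h0, h1]
    unfold Matrix.mulVec dotProduct
    rw [Finset.sum_congr rfl (fun g _ => hterm g), ← Finset.mul_sum,
      Finset.sum_add_distrib, Finset.sum_ite_eq' Finset.univ, Finset.sum_ite_eq' Finset.univ]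
    simp
  choose t pi hU hpm hent using fun i => pauli_data (hPmem i)
  set i0 : Fin n := ⟨0, by linarith⟩ with hi0
  set i1 : Fin n := ⟨1, by linarith⟩ with hi1
  set i2 : Fin n := ⟨2, by omega⟩ with hi2
  have hq0 : ∀ a b x : Fin 2, qf (n := n) a b x i0 = a := fun _ _ _ => rfl
  have hq1 : ∀ a b x : Fin 2, qf (n := n) a b x i1 = b := fun _ _ _ => rfl
  have hqt : ∀ (a b x : Fin 2) (i : Fin n), 2 ≤ i.val → qf a b x i = x := by
    intro a b x i hi
    unfold qf
    rw [if_neg (by omega), if_neg (by omega)]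
  by_cases hconst : ∀ i : Fin n, 2 ≤ i.val → t i = t i2
  · right
    set τ := t i2 with hτdef
    have hkey : ∀ (a b x x₀ : Fin 2), (∏ i, P i (qf a b x i) x₀) =
        if x₀ = x + τ then
          ((if a = x + τ + t i0 then 1 else 0) * (if b = x + τ + t i1 then 1 else 0)) *
            ∏ i, pi i (x + τ) else 0 := by
      intro a b x x₀
      by_cases hx : x₀ = x + τ
      · subst hx
        rw [if_pos rfl]
        have hfac : ∀ i : Fin n, P i (qf a b x i) (x + τ) =
            (if qf a b x i = (x + τ) + t i then 1 else 0) * pi i (x + τ) := by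
          intro i; rw [hent]; split <;> ring
        rw [Finset.prod_congr rfl (fun i _ => hfac i), Finset.prod_mul_distrib]
        congr 1
        have h01 : i0 ≠ i1 := by simp [hi0, hi1, Fin.ext_iff]
        rw [← Finset.mul_prod_erase _ _ (Finset.mem_univ i0),
          ← Finset.mul_prod_erase _ _ (Finset.mem_erase.mpr ⟨h01.symm, Finset.mem_univ i1⟩),
          Finset.prod_eq_one, hq0, hq1]
        · ring
        · intro i hi
          simp only [Finset.mem_erase] at hi
          have hival : 2 ≤ i.val := by
            rcases hi with ⟨hne1, hne0, -⟩
            have v0 : i.val ≠ 0 := fun h => hne0 (by simp [hi0, Fin.ext_iff, h])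
            have v1 : i.val ≠ 1 := fun h => hne1 (by simp [hi1, Fin.ext_iff, h])
            omega
          rw [hqt a b x i hival, hconst i hival, if_pos (by omega)]
      · rw [if_neg hx]
        apply Finset.prod_eq_zero (Finset.mem_univ i2)
        rw [hqt a b x i2 (by simp [hi2]), hent, if_neg]
        intro h
        apply hx
        omega
    refine ⟨τ + t i0, τ + t i1, fun x => ∏ i, pi i (x + τ), ?_, ?_, ?_⟩
    · intro x
      rw [norm_prod]
      apply Finset.prod_eq_one
      intro i _
      rcases fin2_cases (x + τ) with h | h <;> rw [h]
      · exact (hU i).abs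
      · rcases hpm i with h2 | h2 <;> rw [h2] <;> simp [(hU i).abs]
    · apply prod_pm
      intro i _
      rcases fin2_cases τ with h | h <;> rw [h]
      · simpa using hpm i
      · have e1 : (1 : Fin 2) + 1 = 0 := rfl
        have e2 : (0 : Fin 2) + 1 = 1 := rfl
        rw [e1, e2]
        rcases hpm i with h2 | h2
        · exact Or.inl h2.symm
        · right; rw [h2]; ring
    · intro a b x
      simp only [← add_assoc]
      rw [hval, hkey, hkey]
      rcases fin2_cases (x + τ) with h | h
      · rw [if_pos h.symm, if_neg (show ¬(1:Fin 2) = x + τ by omega)]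
        ring
      · rw [if_neg (show ¬(0:Fin 2) = x + τ by omega), if_pos h.symm]
        ring
  · left
    push_neg at hconst
    obtain ⟨j, hj2, hjt⟩ := hconst
    intro a b x
    rw [hval]
    have hz : ∀ x₀ : Fin 2, (∏ i, P i (qf a b x i) x₀) = 0 := by
      intro x₀
      by_cases hc : x = x₀ + t i2
      · apply Finset.prod_eq_zero (Finset.mem_univ j)
        rw [hqt a b x j hj2, hent, if_neg]
        intro h
        apply hjt
        omega
      · apply Finset.prod_eq_zero (Finset.mem_univ i2)
        rw [hqt a b x i2 (by simp [hi2]), hent, if_neg hc]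
    rw [hz, hz]
    ring

def kpat {n : ℕ} (x y : Fin 2) : Fin n ⊕ Fin n → Fin 2 := Sum.elim (fun _ => x) (fun _ => y)

def ppat {n : ℕ} (a b c d x y : Fin 2) : Fin n ⊕ Fin n → Fin 2 :=
  Sum.elim (qf a b x) (qf c d y)

lemma sqrt2_inv_sq : ((Real.sqrt 2 : ℝ) : ℂ)⁻¹ * ((Real.sqrt 2 : ℝ) : ℂ)⁻¹ = 1/2 := by
  rw [← mul_inv, ← Complex.ofReal_mul, Real.mul_self_sqrt (by norm_num)]
  norm_num

lemma tensor2_ghz_eq {n : ℕ} (hn : 3 ≤ n) (g : Fin n ⊕ Fin n → Fin 2) :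
    tensor2 (ghz n) (ghz n) g =
      (1/2 : ℂ) * ∑ p : Fin 2 × Fin 2, (if g = kpat p.1 p.2 then 1 else 0) := by
  have hiff : ∀ x y : Fin 2, g = kpat x y ↔
      ((fun i => g (Sum.inl i)) = (fun _ : Fin n => x) ∧
       (fun i => g (Sum.inr i)) = (fun _ : Fin n => y)) := by
    intro x y
    constructor
    · intro h; subst h; exact ⟨rfl, rfl⟩
    · rintro ⟨h1, h2⟩
      funext i
      rcases i with j | j
      · exact congrFun h1 j
      · exact congrFun h2 j
  rw [Fintype.sum_prod_type]
  simp only [Fin.sum_univ_two]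
  unfold tensor2 ghz
  have key : ∀ x y : Fin 2,
      ((Real.sqrt 2 : ℝ) : ℂ)⁻¹ * (if (fun i => g (Sum.inl i)) = (fun _ : Fin n => x) then 1 else 0) *
        (((Real.sqrt 2 : ℝ) : ℂ)⁻¹ * (if (fun i => g (Sum.inr i)) = (fun _ : Fin n => y) then 1 else 0)) =
      (1/2 : ℂ) * (if g = kpat x y then 1 else 0) := by
    intro x y
    simp only [hiff]
    by_cases h1 : (fun i => g (Sum.inl i)) = (fun _ : Fin n => x) <;>
      by_cases h2 : (fun i => g (Sum.inr i)) = (fun _ : Fin n => y) <;>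
        simp [h1, h2, sqrt2_inv_sq]
  linear_combination key 0 0 + key 0 1 + key 1 0 + key 1 1

lemma lhs_eval {n : ℕ} (hn : 3 ≤ n) (g₁ g₂ : Matrix (Fin 2 × Fin 2) (Fin 2 × Fin 2) ℂ)
    (a b c d x y : Fin 2) :
    (embed2 (Sum.inl ⟨0, by linarith⟩ : Fin n ⊕ Fin n) (Sum.inr ⟨0, by linarith⟩) g₁ *
      embed2 (Sum.inl ⟨1, by linarith⟩ : Fin n ⊕ Fin n) (Sum.inr ⟨1, by linarith⟩) g₂).mulVec
      (tensor2 (ghz n) (ghz n)) (ppat a b c d x y) =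
    (1/2 : ℂ) * (g₁ (a, c) (x, y) * g₂ (b, d) (x, y)) := by
  set l0 : Fin n ⊕ Fin n := Sum.inl ⟨0, by linarith⟩ with hl0
  set r0 : Fin n ⊕ Fin n := Sum.inr ⟨0, by linarith⟩ with hr0
  set l1 : Fin n ⊕ Fin n := Sum.inl ⟨1, by linarith⟩ with hl1
  set r1 : Fin n ⊕ Fin n := Sum.inr ⟨1, by linarith⟩ with hr1
  set f : Fin n ⊕ Fin n → Fin 2 := ppat a b c d x y with hf
  have h2n : 2 < n := by omega
  set j2 : Fin n := ⟨2, h2n⟩ with hj2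
  have hqf2 : ∀ u v w : Fin 2, qf (n := n) u v w j2 = w := by
    intro u v w; unfold qf; rw [if_neg (by simp [hj2]), if_neg (by simp [hj2])]
  have hfl0 : f l0 = a := rfl
  have hfr0 : f r0 = c := rfl
  have hfl1 : f l1 = b := rfl
  have hfr1 : f r1 = d := rfl
  -- the collapsing point of the inner sum
  have main : ∀ p : Fin 2 × Fin 2,
      (embed2 l0 r0 g₁ * embed2 l1 r1 g₂) f (kpat p.1 p.2) =
        g₁ (a, c) (p.1, p.2) * g₂ (b, d) (p.1, p.2) *
          (if (x, y) = p then 1 else 0) := by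
    intro p
    set hstar : Fin n ⊕ Fin n → Fin 2 :=
      fun i => if i = l1 then f l1 else if i = r1 then f r1 else kpat p.1 p.2 i with hhstar
    have hsl1 : hstar l1 = f l1 := by simp [hhstar]
    have hsr1 : hstar r1 = f r1 := by
      simp [hhstar, hr1, hl1]
    have hsother : ∀ i, i ≠ l1 → i ≠ r1 → hstar i = kpat p.1 p.2 i := by
      intro i h1 h2; simp only [hhstar]; rw [if_neg h1, if_neg h2]
    have hsl0 : hstar l0 = p.1 := by
      rw [hsother l0 (by simp [hl0, hl1, Fin.ext_iff]) (by simp [hl0, hr1])]; rfl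
    have hsr0 : hstar r0 = p.2 := by
      rw [hsother r0 (by simp [hr0, hl1]) (by simp [hr0, hr1, Fin.ext_iff])]; rfl
    rw [Matrix.mul_apply]
    rw [Finset.sum_eq_single hstar]
    · -- value at hstar
      unfold embed2
      rw [hsl0, hsr0, hsl1, hsr1, hfl0, hfr0, hfl1, hfr1]
      have h2 : (∏ i ∈ (Finset.univ.erase l1).erase r1,
          (if hstar i = kpat p.1 p.2 i then (1:ℂ) else 0)) = 1 := by
        apply Finset.prod_eq_one
        intro i hi
        simp only [Finset.mem_erase] at hi
        rw [hsother i hi.2.1 hi.1, if_pos rfl]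
      have h1 : (∏ i ∈ (Finset.univ.erase l0).erase r0,
          (if f i = hstar i then (1:ℂ) else 0)) = (if (x, y) = p then 1 else 0) := by
        by_cases hxy : (x, y) = p
        · rw [if_pos hxy]
          apply Finset.prod_eq_one
          intro i hi
          simp only [Finset.mem_erase] at hi
          by_cases hi1 : i = l1
          · subst hi1; rw [hsl1, if_pos rfl]
          · by_cases hi2 : i = r1
            · subst hi2; rw [hsr1, if_pos rfl]
            · rw [hsother i hi1 hi2, if_pos]
              rcases i with j | j
              · have hj0 : j.val ≠ 0 := fun h => hi.2.1 (by simp [hl0, Fin.ext_iff, h])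
                have hj1 : j.val ≠ 1 := fun h => hi1 (by simp [hl1, Fin.ext_iff, h])
                have : f (Sum.inl j) = x := by
                  show qf a b x j = x
                  unfold qf; rw [if_neg hj0, if_neg hj1]
                rw [this]
                exact congrArg Prod.fst hxy
              · have hj0 : j.val ≠ 0 := fun h => hi.1 (by simp [hr0, Fin.ext_iff, h])
                have hj1 : j.val ≠ 1 := fun h => hi2 (by simp [hr1, Fin.ext_iff, h])
                have : f (Sum.inr j) = y := by
                  show qf c d y j = y
                  unfold qf; rw [if_neg hj0, if_neg hj1]
                rw [this]
                exact congrArg Prod.snd hxy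
        · rw [if_neg hxy]
          have hor : x ≠ p.1 ∨ y ≠ p.2 := by
            by_contra hc
            push_neg at hc
            exact hxy (Prod.ext hc.1 hc.2)
          rcases hor with hne | hne
          · apply Finset.prod_eq_zero (i := (Sum.inl j2 : Fin n ⊕ Fin n))
            · simp only [Finset.mem_erase]
              refine ⟨by simp [hr0], by simp [hl0, hj2, Fin.ext_iff], Finset.mem_univ _⟩
            · rw [hsother _ (by simp [hl1, hj2, Fin.ext_iff]) (by simp [hr1])]
              exact if_neg (fun hcond => hne ((hqf2 a b x).symm.trans hcond))
          · apply Finset.prod_eq_zero (i := (Sum.inr j2 : Fin n ⊕ Fin n))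
            · simp only [Finset.mem_erase]
              refine ⟨by simp [hr0, hj2, Fin.ext_iff], by simp [hl0], Finset.mem_univ _⟩
            · rw [hsother _ (by simp [hl1]) (by simp [hr1, hj2, Fin.ext_iff])]
              exact if_neg (fun hcond => hne ((hqf2 c d y).symm.trans hcond))
      rw [h1, h2]
      have e1 : kpat (n := n) p.1 p.2 l1 = p.1 := rfl
      have e2 : kpat (n := n) p.1 p.2 r1 = p.2 := rfl
      rw [e1, e2]
      ring
    · -- other h give zero
      intro h _ hne
      have : ∃ i, h i ≠ hstar i := by
        by_contra hc
        push_neg at hc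
        exact hne (funext hc)
      obtain ⟨i, hi⟩ := this
      unfold embed2
      by_cases hi1 : i = l1
      · subst hi1
        have : (∏ j ∈ (Finset.univ.erase l0).erase r0,
            (if f j = h j then (1:ℂ) else 0)) = 0 := by
          apply Finset.prod_eq_zero (i := l1)
          · simp only [Finset.mem_erase]
            exact ⟨by simp [hl1, hr0], by simp [hl1, hl0, Fin.ext_iff], Finset.mem_univ _⟩
          · rw [if_neg]; rw [hsl1] at hi; exact fun hcc => hi hcc.symm
        rw [this]; ring
      · by_cases hi2 : i = r1
        · subst hi2
          have : (∏ j ∈ (Finset.univ.erase l0).erase r0,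
              (if f j = h j then (1:ℂ) else 0)) = 0 := by
            apply Finset.prod_eq_zero (i := r1)
            · simp only [Finset.mem_erase]
              exact ⟨by simp [hr1, hr0, Fin.ext_iff], by simp [hr1, hl0], Finset.mem_univ _⟩
            · rw [if_neg]; rw [hsr1] at hi; exact fun hcc => hi hcc.symm
          rw [this]; ring
        · have : (∏ j ∈ (Finset.univ.erase l1).erase r1,
              (if h j = kpat p.1 p.2 j then (1:ℂ) else 0)) = 0 := by
            apply Finset.prod_eq_zero (i := i)
            · simp only [Finset.mem_erase]
              exact ⟨hi2, hi1, Finset.mem_univ _⟩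
            · rw [if_neg]; rw [hsother i hi1 hi2] at hi; exact hi
          rw [this]; ring
    · intro hmem
      exact absurd (Finset.mem_univ hstar) hmem
  -- now the outer computation
  unfold Matrix.mulVec dotProduct
  have hterm : ∀ g : Fin n ⊕ Fin n → Fin 2,
      (embed2 l0 r0 g₁ * embed2 l1 r1 g₂) f g * tensor2 (ghz n) (ghz n) g =
      (1/2 : ℂ) * ∑ p : Fin 2 × Fin 2,
        (if g = kpat p.1 p.2 then (embed2 l0 r0 g₁ * embed2 l1 r1 g₂) f (kpat p.1 p.2) else 0) := by
    intro g
    rw [tensor2_ghz_eq hn, Finset.mul_sum, Finset.mul_sum, Finset.mul_sum]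
    congr 1
    funext p
    by_cases hg : g = kpat p.1 p.2
    · rw [if_pos hg, if_pos hg, hg]; ring
    · rw [if_neg hg, if_neg hg]; ring
  rw [Finset.sum_congr rfl (fun g _ => hterm g), ← Finset.mul_sum, Finset.sum_comm]
  have hcol : ∀ p : Fin 2 × Fin 2,
      (∑ g : Fin n ⊕ Fin n → Fin 2,
        (if g = kpat p.1 p.2 then (embed2 l0 r0 g₁ * embed2 l1 r1 g₂) f (kpat p.1 p.2) else 0)) =
      g₁ (a, c) (p.1, p.2) * g₂ (b, d) (p.1, p.2) * (if (x, y) = p then 1 else 0) := by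
    intro p
    rw [Finset.sum_ite_eq' Finset.univ (kpat p.1 p.2), if_pos (Finset.mem_univ _), main]
  rw [Finset.sum_congr rfl (fun p _ => hcol p)]
  have : (∑ p : Fin 2 × Fin 2, g₁ (a, c) (p.1, p.2) * g₂ (b, d) (p.1, p.2) *
      (if (x, y) = p then 1 else 0)) = g₁ (a, c) (x, y) * g₂ (b, d) (x, y) := by
    rw [Finset.sum_eq_single (x, y)]
    · simp
    · intro q _ hq; rw [if_neg (fun hc => hq hc.symm)]; ring
    · intro hmem; exact absurd (Finset.mem_univ _) hmem
  rw [this]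

lemma IsU4.neg {z : ℂ} (h : IsU4 z) : IsU4 (-z) := by
  rcases h with rfl | rfl | rfl | rfl <;> simp [IsU4] <;> tauto

lemma pm_shift (pi : Fin 2 → ℂ) (h : pi 1 = pi 0 ∨ pi 1 = -pi 0) (r : Fin 2) :
    pi (1 + r) = pi (0 + r) ∨ pi (1 + r) = -pi (0 + r) := by
  rcases fin2_cases r with rfl | rfl
  · have e1 : (1 : Fin 2) + 0 = 1 := rfl
    have e2 : (0 : Fin 2) + 0 = 0 := rfl
    rw [e1, e2]; exact h
  · have e1 : (1 : Fin 2) + 1 = 0 := rfl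
    have e2 : (0 : Fin 2) + 1 = 1 := rfl
    rw [e1, e2]
    rcases h with h | h
    · exact Or.inl h.symm
    · exact Or.inr (by rw [h]; ring)

lemma fin2_add_cancel : ∀ u v w : Fin 2, u + w = v + w → u = v := by decide

lemma conj_formula (g : Matrix (Fin 2 × Fin 2) (Fin 2 × Fin 2) ℂ)
    (A : Fin 2 → Fin 2 → ℂ) (s r : Fin 2)
    (hstruct : ∀ p q : Fin 2 × Fin 2,
      g p q = A q.1 q.2 * (if p = (q.1 + s, q.2 + r) then 1 else 0))
    (K : Matrix (Fin 2 × Fin 2) (Fin 2 × Fin 2) ℂ) (x y x' y' : Fin 2) :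
    (g * K * star g) (x + s, y + r) (x' + s, y' + r) =
      A x y * K (x, y) (x', y') * (starRingEnd ℂ) (A x' y') := by
  rw [Matrix.mul_apply]
  rw [Finset.sum_eq_single ((x', y') : Fin 2 × Fin 2)]
  · have hg2 : g (x' + s, y' + r) (x', y') = A x' y' := by
      rw [hstruct, if_pos rfl, mul_one]
    have hstar : (star g) ((x', y') : Fin 2 × Fin 2) (x' + s, y' + r) =
        (starRingEnd ℂ) (A x' y') := by
      rw [Matrix.star_apply, hg2]; rfl
    rw [hstar]
    have hgk : (g * K) (x + s, y + r) ((x', y') : Fin 2 × Fin 2) =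
        A x y * K (x, y) (x', y') := by
      rw [Matrix.mul_apply]
      rw [Finset.sum_eq_single ((x, y) : Fin 2 × Fin 2)]
      · rw [hstruct, if_pos rfl, mul_one]
      · intro q _ hq
        rw [hstruct, if_neg, mul_zero, zero_mul]
        intro hc
        apply hq
        have h1 : q.1 + s = x + s := congrArg Prod.fst hc.symm
        have h2 : q.2 + r = y + r := congrArg Prod.snd hc.symm
        exact Prod.ext (fin2_add_cancel _ _ _ h1) (fin2_add_cancel _ _ _ h2)
      · intro hmem; exact absurd (Finset.mem_univ _) hmem
    rw [hgk]
  · intro j _ hj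
    have : (star g) j (x' + s, y' + r) = 0 := by
      rw [Matrix.star_apply, hstruct, if_neg, mul_zero, star_zero]
      intro hc
      apply hj
      have h1 : j.1 + s = x' + s := congrArg Prod.fst hc.symm
      have h2 : j.2 + r = y' + r := congrArg Prod.snd hc.symm
      exact Prod.ext (fin2_add_cancel _ _ _ h1) (fin2_add_cancel _ _ _ h2)
    rw [this, mul_zero]
  · intro hmem; exact absurd (Finset.mem_univ _) hmem

lemma kX1_mem : kron2 pX pI ∈ Pauli2Set := by
  refine ⟨1, by left; rfl, pX, by simp [pauliSet], pI, by simp [pauliSet], by simp⟩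

lemma kIX_mem : kron2 pI pX ∈ Pauli2Set := by
  refine ⟨1, by left; rfl, pI, by simp [pauliSet], pX, by simp [pauliSet], by simp⟩

lemma kX1_val : ∀ x y : Fin 2, kron2 pX pI (x + 1, y) (x, y) = 1 := by
  intro x y
  show pX (x + 1) x * pI y y = 1
  have h1 : ∀ x : Fin 2, pX (x + 1) x = 1 := by
    intro x; fin_cases x <;> simp [pX] <;> rfl
  rw [h1, pI, Matrix.one_apply_eq, mul_one]

lemma kIX_val : ∀ x y : Fin 2, kron2 pI pX (x, y + 1) (x, y) = 1 := by
  intro x y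
  show pI x x * pX (y + 1) y = 1
  have h1 : ∀ y : Fin 2, pX (y + 1) y = 1 := by
    intro y; fin_cases y <;> simp [pX] <;> rfl
  rw [h1, pI, Matrix.one_apply_eq, one_mul]

lemma u4_of_mem {lam : ℂ} (h : lam ∈ ({1, -1, Complex.I, -Complex.I} : Set ℂ)) : IsU4 lam := by
  simpa [IsU4, Set.mem_insert_iff] using h

lemma conj_eq_zero {z : ℂ} (h : (starRingEnd ℂ) z = 0) : z = 0 := by
  simpa using congrArg (starRingEnd ℂ) h

lemma clifford_struct (g : Matrix (Fin 2 × Fin 2) (Fin 2 × Fin 2) ℂ) (hg : IsClifford2 g)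
    (A : Fin 2 → Fin 2 → ℂ) (s r : Fin 2)
    (hstruct : ∀ p q : Fin 2 × Fin 2,
      g p q = A q.1 q.2 * (if p = (q.1 + s, q.2 + r) then 1 else 0)) :
    (∀ x y, (starRingEnd ℂ) (A x y) * A x y = 1) ∧
    (∃ ρ : ℂ, IsU4 ρ ∧ A 1 0 = ρ * A 0 0 ∧ (A 1 1 = ρ * A 0 1 ∨ A 1 1 = -(ρ * A 0 1))) ∧
    (∃ σ : ℂ, IsU4 σ ∧ A 0 1 = σ * A 0 0 ∧ (A 1 1 = σ * A 1 0 ∨ A 1 1 = -(σ * A 1 0))) := by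
  have hu : star g * g = 1 := hg.1.1
  have hinv : ∀ x y, (starRingEnd ℂ) (A x y) * A x y = 1 := by
    intro x y
    have h2 : (star g * g) ((x, y) : Fin 2 × Fin 2) (x, y) =
        (1 : Matrix (Fin 2 × Fin 2) (Fin 2 × Fin 2) ℂ) (x, y) (x, y) := by rw [hu]
    rw [Matrix.mul_apply, Matrix.one_apply_eq] at h2
    rw [← h2]
    rw [Finset.sum_eq_single ((x + s, y + r) : Fin 2 × Fin 2)]
    · rw [Matrix.star_apply, hstruct, if_pos rfl, mul_one]; rfl
    · intro p _ hp
      rw [Matrix.star_apply, hstruct, if_neg hp, mul_zero, star_zero, zero_mul]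
    · intro hmem; exact absurd (Finset.mem_univ _) hmem
  have hA_ne : ∀ x y, A x y ≠ 0 := by
    intro x y h0
    have := hinv x y
    rw [h0, mul_zero] at this
    exact zero_ne_one this
  have hginv : g⁻¹ = star g := Matrix.inv_eq_left_inv hu
  have hmem : ∀ K ∈ Pauli2Set, g * K * star g ∈ Pauli2Set := by
    intro K hK
    rw [← hginv, ← hg.2]
    exact ⟨K, hK, rfl⟩
  refine ⟨hinv, ?_, ?_⟩
  · -- row ratio ρ, via conjugating X⊗I
    obtain ⟨lam, hlam, P, hP, Q, hQ, hN⟩ := hmem _ kX1_mem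
    have hlam4 : IsU4 lam := u4_of_mem hlam
    obtain ⟨tP, piP, hUP, hpmP, hentP⟩ := pauli_data hP
    obtain ⟨tQ, piQ, hUQ, hpmQ, hentQ⟩ := pauli_data hQ
    have hUP' : ∀ z, IsU4 (piP z) := by
      intro z; rcases fin2_cases z with rfl | rfl
      · exact hUP
      · rcases hpmP with h | h <;> rw [h]
        · exact hUP
        · exact hUP.neg
    have hUQ' : ∀ z, IsU4 (piQ z) := by
      intro z; rcases fin2_cases z with rfl | rfl
      · exact hUQ
      · rcases hpmQ with h | h <;> rw [h]
        · exact hUQ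
        · exact hUQ.neg
    have hEQ0 : ∀ x y : Fin 2, A (x + 1) y * (starRingEnd ℂ) (A x y) =
        lam * (P (x + 1 + s) (x + s) * Q (y + r) (y + r)) := by
      intro x y
      have h1 := conj_formula g A s r hstruct (kron2 pX pI) (x + 1) y x y
      rw [hN] at h1
      rw [kX1_val] at h1
      rw [mul_one] at h1
      rw [← h1]
      simp only [Matrix.smul_apply, kron2, smul_eq_mul]
      try ring
    have htP : tP = 1 := by
      rcases fin2_cases tP with h | h
      · exfalso
        have := hEQ0 0 0
        rw [hentP, if_neg (by omega)] at this
        rw [zero_mul, mul_zero] at this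
        have h1 := hA_ne (0 + 1) 0
        have h2 := hA_ne 0 0
        rcases mul_eq_zero.mp this with h3 | h3
        · exact h1 h3
        · exact h2 (conj_eq_zero h3)
      · exact h
    have htQ : tQ = 0 := by
      rcases fin2_cases tQ with h | h
      · exact h
      · exfalso
        have := hEQ0 0 0
        rw [hentQ, if_neg (by omega)] at this
        rw [mul_zero, mul_zero] at this
        have h1 := hA_ne (0 + 1) 0
        have h2 := hA_ne 0 0
        rcases mul_eq_zero.mp this with h3 | h3
        · exact h1 h3
        · exact h2 (conj_eq_zero h3)
    have hEQ : ∀ x y : Fin 2, A (x + 1) y * (starRingEnd ℂ) (A x y) =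
        lam * piP (x + s) * piQ (y + r) := by
      intro x y
      rw [hEQ0, hentP, hentQ, if_pos (by omega), if_pos (by omega)]
      ring
    have he1 : (0 : Fin 2) + 1 = 1 := rfl
    set ρ := A 1 0 * (starRingEnd ℂ) (A 0 0) with hρ
    have hρval : ρ = lam * piP (0 + s) * piQ (0 + r) := by
      rw [hρ, ← hEQ 0 0, he1]
    refine ⟨ρ, ?_, ?_, ?_⟩
    · rw [hρval]
      exact (hlam4.mul (hUP' _)).mul (hUQ' _)
    · rw [hρ, mul_assoc, hinv, mul_one]
    · have h11 : A 1 1 * (starRingEnd ℂ) (A 0 1) = lam * piP (0 + s) * piQ (1 + r) := by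
        rw [← hEQ 0 1, he1]
      have hr : A 1 1 * (starRingEnd ℂ) (A 0 1) = ρ ∨
          A 1 1 * (starRingEnd ℂ) (A 0 1) = -ρ := by
        rcases pm_shift piQ hpmQ r with h | h
        · left; rw [h11, h, hρval]
        · right; rw [h11, h, hρval]; ring
      have hA11 : A 1 1 = (A 1 1 * (starRingEnd ℂ) (A 0 1)) * A 0 1 := by
        rw [mul_assoc, hinv, mul_one]
      rcases hr with h | h
      · left; rw [hA11, h]
      · right; rw [hA11, h]; ring
  · -- column ratio σ, via conjugating I⊗X
    obtain ⟨lam, hlam, P, hP, Q, hQ, hN⟩ := hmem _ kIX_mem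
    have hlam4 : IsU4 lam := u4_of_mem hlam
    obtain ⟨tP, piP, hUP, hpmP, hentP⟩ := pauli_data hP
    obtain ⟨tQ, piQ, hUQ, hpmQ, hentQ⟩ := pauli_data hQ
    have hUP' : ∀ z, IsU4 (piP z) := by
      intro z; rcases fin2_cases z with rfl | rfl
      · exact hUP
      · rcases hpmP with h | h <;> rw [h]
        · exact hUP
        · exact hUP.neg
    have hUQ' : ∀ z, IsU4 (piQ z) := by
      intro z; rcases fin2_cases z with rfl | rfl
      · exact hUQ
      · rcases hpmQ with h | h <;> rw [h]
        · exact hUQ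
        · exact hUQ.neg
    have hEQ0 : ∀ x y : Fin 2, A x (y + 1) * (starRingEnd ℂ) (A x y) =
        lam * (P (x + s) (x + s) * Q (y + 1 + r) (y + r)) := by
      intro x y
      have h1 := conj_formula g A s r hstruct (kron2 pI pX) x (y + 1) x y
      rw [hN] at h1
      rw [kIX_val] at h1
      rw [mul_one] at h1
      rw [← h1]
      simp only [Matrix.smul_apply, kron2, smul_eq_mul]
      try ring
    have htQ : tQ = 1 := by
      rcases fin2_cases tQ with h | h
      · exfalso
        have := hEQ0 0 0
        rw [hentQ, if_neg (by omega)] at this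
        rw [mul_zero, mul_zero] at this
        have h1 := hA_ne 0 (0 + 1)
        have h2 := hA_ne 0 0
        rcases mul_eq_zero.mp this with h3 | h3
        · exact h1 h3
        · exact h2 (conj_eq_zero h3)
      · exact h
    have htP : tP = 0 := by
      rcases fin2_cases tP with h | h
      · exact h
      · exfalso
        have := hEQ0 0 0
        rw [hentP, if_neg (by omega)] at this
        rw [zero_mul, mul_zero] at this
        have h1 := hA_ne 0 (0 + 1)
        have h2 := hA_ne 0 0
        rcases mul_eq_zero.mp this with h3 | h3
        · exact h1 h3
        · exact h2 (conj_eq_zero h3)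
    have hEQ : ∀ x y : Fin 2, A x (y + 1) * (starRingEnd ℂ) (A x y) =
        lam * piP (x + s) * piQ (y + r) := by
      intro x y
      rw [hEQ0, hentP, hentQ, if_pos (by omega), if_pos (by omega)]
      ring
    have he1 : (0 : Fin 2) + 1 = 1 := rfl
    set σ := A 0 1 * (starRingEnd ℂ) (A 0 0) with hσ
    have hσval : σ = lam * piP (0 + s) * piQ (0 + r) := by
      rw [hσ, ← hEQ 0 0, he1]
    refine ⟨σ, ?_, ?_, ?_⟩
    · rw [hσval]
      exact (hlam4.mul (hUP' _)).mul (hUQ' _)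
    · rw [hσ, mul_assoc, hinv, mul_one]
    · have h11 : A 1 1 * (starRingEnd ℂ) (A 1 0) = lam * piP (1 + s) * piQ (0 + r) := by
        rw [← hEQ 1 0, he1]
      have hr : A 1 1 * (starRingEnd ℂ) (A 1 0) = σ ∨
          A 1 1 * (starRingEnd ℂ) (A 1 0) = -σ := by
        rcases pm_shift piP hpmP s with h | h
        · left; rw [h11, h, hσval]; try ring
        · right; rw [h11, h, hσval]; ring
      have hA11 : A 1 1 = (A 1 1 * (starRingEnd ℂ) (A 1 0)) * A 1 0 := by
        rw [mul_assoc, hinv, mul_one]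
      rcases hr with h | h
      · left; rw [hA11, h]
      · right; rw [hA11, h]; ring

lemma ghz_isBasis (n : ℕ) : IsGHZBasis (ghz n) := by
  refine ⟨1, ⟨fun _ => pI, fun _ => by simp [pauliSet], ?_⟩, (Matrix.one_mulVec _).symm⟩
  ext f g
  rw [Matrix.one_apply]
  unfold kron pI
  rw [Finset.prod_congr rfl (fun i (_ : i ∈ Finset.univ) => Matrix.one_apply (i := f i) (j := g i))]
  rw [Finset.prod_boole]
  simp [funext_iff]

def ddfun (a b c : Fin 2) : Fin 2 × Fin 2 → ℂ := fun q =>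
  (if q.1 = 1 ∧ q.2 = 1 then ((-1 : ℂ)) ^ (a : ℕ) else 1) *
    ((if q.1 = 1 then Complex.I ^ (b : ℕ) else 1) * (if q.2 = 1 then Complex.I ^ (c : ℕ) else 1))

lemma sgate_diag (b : Fin 2) :
    sGate ^ (b : ℕ) = Matrix.diagonal (fun u => if u = 1 then Complex.I ^ (b : ℕ) else 1) := by
  fin_cases b
  · simp
  · show sGate ^ (1:ℕ) = _
    rw [pow_one, pow_one]
    ext i j
    fin_cases i <;> fin_cases j <;> simp [sGate, Matrix.diagonal_apply]

lemma kron2_diagonal (u v : Fin 2 → ℂ) :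
    kron2 (Matrix.diagonal u) (Matrix.diagonal v) =
      Matrix.diagonal (fun q => u q.1 * v q.2) := by
  ext p q
  by_cases h1 : p.1 = q.1 <;> by_cases h2 : p.2 = q.2 <;>
    simp [kron2, Matrix.diagonal_apply, h1, h2, Prod.ext_iff]

lemma cz_pow_diag (a : Fin 2) :
    cz2 ^ (a : ℕ) =
      Matrix.diagonal (fun q : Fin 2 × Fin 2 =>
        if q.1 = 1 ∧ q.2 = 1 then ((-1 : ℂ)) ^ (a : ℕ) else 1) := by
  fin_cases a
  · simp
  · show cz2 ^ (1:ℕ) = _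
    rw [pow_one]
    unfold cz2
    congr 1
    funext q
    simp

lemma dd_eq (a b c : Fin 2) :
    cz2 ^ (a : ℕ) * kron2 (sGate ^ (b : ℕ)) (sGate ^ (c : ℕ)) =
      Matrix.diagonal (ddfun a b c) := by
  rw [cz_pow_diag, sgate_diag, sgate_diag, kron2_diagonal, Matrix.diagonal_mul_diagonal]
  rfl

lemma pauli_match (s : Fin 2) (ζ : ℂ) (hζ : ζ = 1 ∨ ζ = -1) :
    ∃ P ∈ pauliSet, ∃ ω : ℂ, ‖ω‖ = 1 ∧
      ∀ u v : Fin 2, (if u = v + s then (if v = 1 then ζ else 1) else 0) = ω * P u v := by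
  rcases fin2_cases s with rfl | rfl <;> rcases hζ with rfl | rfl
  · refine ⟨pI, by simp [pauliSet], 1, by simp, ?_⟩
    intro u v; fin_cases u <;> fin_cases v <;> simp [pI, Matrix.one_apply] <;> decide
  · refine ⟨pZ, by simp [pauliSet], 1, by simp, ?_⟩
    intro u v; fin_cases u <;> fin_cases v <;> simp [pZ] <;> decide
  · refine ⟨pX, by simp [pauliSet], 1, by simp, ?_⟩
    intro u v; fin_cases u <;> fin_cases v <;> simp [pX] <;> decide
  · refine ⟨pY, by simp [pauliSet], -Complex.I, by simp, ?_⟩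
    intro u v; fin_cases u <;> fin_cases v <;>
      simp [pY, Complex.I_mul_I] <;> first | decide | norm_num [Complex.I_mul_I]
  
lemma unitary_col_ne_zero {g : Matrix (Fin 2 × Fin 2) (Fin 2 × Fin 2) ℂ}
    (hg : g ∈ Matrix.unitaryGroup (Fin 2 × Fin 2) ℂ) (q : Fin 2 × Fin 2) :
    ∃ p, g p q ≠ 0 := by
  by_contra hc
  push_neg at hc
  have hu : star g * g = 1 := hg.1
  have h2 : (star g * g) q q = 1 := by rw [hu, Matrix.one_apply_eq]
  rw [Matrix.mul_apply] at h2
  have hz : ∀ p ∈ Finset.univ, (star g) q p * g p q = 0 := fun p _ => by rw [hc p, mul_zero]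
  rw [Finset.sum_congr rfl hz] at h2
  simp at h2

lemma abs_one_of_conj_mul {z : ℂ} (h : (starRingEnd ℂ) z * z = 1) : ‖z‖ = 1 := by
  have h2 := congrArg (fun w : ℂ => ‖w‖) h
  simp only [norm_mul, Complex.norm_conj, norm_one] at h2
  nlinarith [norm_nonneg z]

lemma rho_parity (p1 p2 : ℂ) (h1 : IsU4 p1) (h2 : IsU4 p2)
    (hp : p1 * p2 = 1 ∨ p1 * p2 = -1) :
    ∃ b : Fin 2, ∃ z1 z2 : ℂ, (z1 = 1 ∨ z1 = -1) ∧ (z2 = 1 ∨ z2 = -1) ∧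
      p1 = z1 * Complex.I ^ (b : ℕ) ∧ p2 = z2 * Complex.I ^ (b : ℕ) := by
  rcases h1 with rfl | rfl | rfl | rfl <;> rcases h2 with rfl | rfl | rfl | rfl
  · exact ⟨0, 1, 1, Or.inl rfl, Or.inl rfl, by norm_num, by norm_num⟩
  · exact ⟨0, 1, -1, Or.inl rfl, Or.inr rfl, by norm_num, by norm_num⟩
  · exfalso; rcases hp with h | h <;> simpa [Complex.ext_iff] using h
  · exfalso; rcases hp with h | h <;> simpa [Complex.ext_iff] using h
  · exact ⟨0, -1, 1, Or.inr rfl, Or.inl rfl, by norm_num, by norm_num⟩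
  · exact ⟨0, -1, -1, Or.inr rfl, Or.inr rfl, by norm_num, by norm_num⟩
  · exfalso; rcases hp with h | h <;> simpa [Complex.ext_iff] using h
  · exfalso; rcases hp with h | h <;> simpa [Complex.ext_iff] using h
  · exfalso; rcases hp with h | h <;> simpa [Complex.ext_iff] using h
  · exfalso; rcases hp with h | h <;> simpa [Complex.ext_iff] using h
  · refine ⟨1, 1, 1, Or.inl rfl, Or.inl rfl, by norm_num, by norm_num⟩
  · refine ⟨1, 1, -1, Or.inl rfl, Or.inr rfl, by norm_num, by norm_num⟩
  · exfalso; rcases hp with h | h <;> simpa [Complex.ext_iff] using h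
  · exfalso; rcases hp with h | h <;> simpa [Complex.ext_iff] using h
  · refine ⟨1, -1, 1, Or.inr rfl, Or.inl rfl, by norm_num, by norm_num⟩
  · refine ⟨1, -1, -1, Or.inr rfl, Or.inr rfl, by norm_num, by norm_num⟩

/-- STATEMENT 5: if applying the two-qubit Clifford gates `g₁` (at node 1) and `g₂`
(at node 2) bilocally is GHZ-preserving, then up to unit phases and Pauli factors
both gates equal the same `CZ^a (S^b ⊗ S^c)`. -/
theorem stmt5 (n : ℕ) (hn : 3 ≤ n)
    (g₁ g₂ : Matrix (Fin 2 × Fin 2) (Fin 2 × Fin 2) ℂ)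
    (hg₁ : IsClifford2 g₁) (hg₂ : IsClifford2 g₂)
    (hpres : GHZPreserving2 (n := n)
      (embed2 (Sum.inl ⟨0, by omega⟩ : Fin n ⊕ Fin n) (Sum.inr ⟨0, by omega⟩) g₁ *
        embed2 (Sum.inl ⟨1, by omega⟩ : Fin n ⊕ Fin n) (Sum.inr ⟨1, by omega⟩) g₂)) :
    ∃ a b c : Fin 2,
      ∃ P₁ ∈ pauliSet, ∃ P₁' ∈ pauliSet, ∃ P₂ ∈ pauliSet, ∃ P₂' ∈ pauliSet,
        ∃ lam₁ lam₂ : ℂ, ‖lam₁‖ = 1 ∧ ‖lam₂‖ = 1 ∧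
          g₁ = lam₁ • (kron2 P₁ P₁' *
              (cz2 ^ (a : ℕ) * kron2 (sGate ^ (b : ℕ)) (sGate ^ (c : ℕ)))) ∧
          g₂ = lam₂ • (kron2 P₂ P₂' *
              (cz2 ^ (a : ℕ) * kron2 (sGate ^ (b : ℕ)) (sGate ^ (c : ℕ)))) := by
  obtain ⟨u', v', hu', hv', lam, hlam, heq⟩ :=
    hpres (ghz n) (ghz n) (ghz_isBasis n) (ghz_isBasis n)
  have hlamne : lam ≠ 0 := by
    intro h; rw [h] at hlam; simp at hlam
  have master0 : ∀ a b c d x y : Fin 2,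
      (1/2 : ℂ) * (g₁ (a, c) (x, y) * g₂ (b, d) (x, y)) =
        lam * (u' (qf a b x) * v' (qf c d y)) := by
    intro a b c d x y
    have h1 := congrFun heq (ppat a b c d x y)
    rw [lhs_eval hn g₁ g₂ a b c d x y] at h1
    rw [h1]
    rfl
  rcases ghz_basis_eval hn hu' with hu0 | ⟨sA, sB, Φ, hΦabs, hΦpm, hΦ⟩
  · exfalso
    obtain ⟨p, hp⟩ := unitary_col_ne_zero hg₁.1 (0, 0)
    obtain ⟨p', hp'⟩ := unitary_col_ne_zero hg₂.1 (0, 0)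
    have h := master0 p.1 p'.1 p.2 p'.2 0 0
    rw [hu0 p.1 p'.1 0, zero_mul, mul_zero] at h
    rcases mul_eq_zero.mp h with h' | h'
    · norm_num at h'
    · rcases mul_eq_zero.mp h' with h'' | h''
      · exact hp h''
      · exact hp' h''
  rcases ghz_basis_eval hn hv' with hv0 | ⟨rA, rB, Ψ, hΨabs, hΨpm, hΨ⟩
  · exfalso
    obtain ⟨p, hp⟩ := unitary_col_ne_zero hg₁.1 (0, 0)
    obtain ⟨p', hp'⟩ := unitary_col_ne_zero hg₂.1 (0, 0)
    have h := master0 p.1 p'.1 p.2 p'.2 0 0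
    rw [hv0 p.2 p'.2 0, mul_zero, mul_zero] at h
    rcases mul_eq_zero.mp h with h' | h'
    · norm_num at h'
    · rcases mul_eq_zero.mp h' with h'' | h''
      · exact hp h''
      · exact hp' h''
  have hΦne : ∀ x, Φ x ≠ 0 := by
    intro x h; have := hΦabs x; rw [h] at this; simp at this
  have hΨne : ∀ y, Ψ y ≠ 0 := by
    intro y h; have := hΨabs y; rw [h] at this; simp at this
  have master : ∀ a b c d x y : Fin 2,
      g₁ (a, c) (x, y) * g₂ (b, d) (x, y) =
        lam * Φ x * Ψ y * ((if a = x + sA then (1:ℂ) else 0) * (if b = x + sB then 1 else 0) *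
          ((if c = y + rA then 1 else 0) * (if d = y + rB then 1 else 0))) := by
    intro a b c d x y
    have h := master0 a b c d x y
    rw [hΦ a b x, hΨ c d y] at h
    linear_combination 2 * h + 2 * (lam * Φ x * Ψ y *
      ((if a = x + sA then (1:ℂ) else 0) * (if b = x + sB then 1 else 0) *
        ((if c = y + rA then 1 else 0) * (if d = y + rB then 1 else 0)))) * sqrt2_inv_sq
  set A0 : Fin 2 → Fin 2 → ℂ := fun x y => g₁ (x + sA, y + rA) (x, y) with hA0def
  set B0 : Fin 2 → Fin 2 → ℂ := fun x y => g₂ (x + sB, y + rB) (x, y) with hB0def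
  have hprod : ∀ x y, A0 x y * B0 x y = lam * Φ x * Ψ y := by
    intro x y
    have h := master (x + sA) (x + sB) (y + rA) (y + rB) x y
    simpa using h
  have hprod_ne : ∀ x y, A0 x y * B0 x y ≠ 0 := by
    intro x y
    rw [hprod]
    exact mul_ne_zero (mul_ne_zero hlamne (hΦne x)) (hΨne y)
  have hA0ne : ∀ x y, A0 x y ≠ 0 := fun x y h => hprod_ne x y (by rw [h, zero_mul])
  have hB0ne : ∀ x y, B0 x y ≠ 0 := fun x y h => hprod_ne x y (by rw [h, mul_zero])
  have hstruct1 : ∀ p q : Fin 2 × Fin 2,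
      g₁ p q = A0 q.1 q.2 * (if p = (q.1 + sA, q.2 + rA) then 1 else 0) := by
    rintro ⟨a, c⟩ ⟨x, y⟩
    by_cases hp : ((a, c) : Fin 2 × Fin 2) = (x + sA, y + rA)
    · rw [if_pos hp, mul_one, hp]
    · rw [if_neg hp, mul_zero]
      have hor : a ≠ x + sA ∨ c ≠ y + rA := by
        by_contra hc; push_neg at hc; exact hp (Prod.ext hc.1 hc.2)
      have h := master a (x + sB) c (y + rB) x y
      have hzero : g₁ (a, c) (x, y) * B0 x y = 0 := by
        rw [h]
        rcases hor with h' | h' <;> rw [if_neg h'] <;> ring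
      rcases mul_eq_zero.mp hzero with h' | h'
      · exact h'
      · exact absurd h' (hB0ne x y)
  have hstruct2 : ∀ p q : Fin 2 × Fin 2,
      g₂ p q = B0 q.1 q.2 * (if p = (q.1 + sB, q.2 + rB) then 1 else 0) := by
    rintro ⟨b, d⟩ ⟨x, y⟩
    by_cases hp : ((b, d) : Fin 2 × Fin 2) = (x + sB, y + rB)
    · rw [if_pos hp, mul_one, hp]
    · rw [if_neg hp, mul_zero]
      have hor : b ≠ x + sB ∨ d ≠ y + rB := by
        by_contra hc; push_neg at hc; exact hp (Prod.ext hc.1 hc.2)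
      have h := master (x + sA) b (y + rA) d x y
      have hzero : A0 x y * g₂ (b, d) (x, y) = 0 := by
        rw [h]
        rcases hor with h' | h' <;> rw [if_neg h'] <;> ring
      rcases mul_eq_zero.mp hzero with h' | h'
      · exact absurd h' (hA0ne x y)
      · exact h'
  obtain ⟨hinv1, ⟨ρ₁, hρ₁U, hρ₁0, hρ₁1⟩, ⟨σ₁, hσ₁U, hσ₁0, hσ₁1⟩⟩ :=
    clifford_struct g₁ hg₁ A0 sA rA hstruct1
  obtain ⟨hinv2, ⟨ρ₂, hρ₂U, hρ₂0, hρ₂1⟩, ⟨σ₂, hσ₂U, hσ₂0, hσ₂1⟩⟩ :=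
    clifford_struct g₂ hg₂ B0 sB rB hstruct2
  obtain ⟨ε₁, hε₁pm, hε₁⟩ : ∃ e : ℂ, (e = 1 ∨ e = -1) ∧ A0 1 1 = e * (ρ₁ * (σ₁ * A0 0 0)) := by
    rcases hρ₁1 with h | h
    · exact ⟨1, Or.inl rfl, by rw [h, hσ₁0]; ring⟩
    · exact ⟨-1, Or.inr rfl, by rw [h, hσ₁0]; ring⟩
  obtain ⟨ε₂, hε₂pm, hε₂⟩ : ∃ e : ℂ, (e = 1 ∨ e = -1) ∧ B0 1 1 = e * (ρ₂ * (σ₂ * B0 0 0)) := by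
    rcases hρ₂1 with h | h
    · exact ⟨1, Or.inl rfl, by rw [h, hσ₂0]; ring⟩
    · exact ⟨-1, Or.inr rfl, by rw [h, hσ₂0]; ring⟩
  have h00 := hprod 0 0
  have h10 := hprod 1 0
  have h01 := hprod 0 1
  have h11 := hprod 1 1
  have hρρc : ρ₁ * ρ₂ * Φ 0 = Φ 1 := by
    apply mul_right_cancel₀ (mul_ne_zero hlamne (hΨne 0))
    have e1 : A0 1 0 * B0 1 0 = (ρ₁ * ρ₂) * (A0 0 0 * B0 0 0) := by
      rw [hρ₁0, hρ₂0]; ring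
    rw [h10, h00] at e1
    linear_combination -e1
  have hσσc : σ₁ * σ₂ * Ψ 0 = Ψ 1 := by
    apply mul_right_cancel₀ (mul_ne_zero hlamne (hΦne 0))
    have e1 : A0 0 1 * B0 0 1 = (σ₁ * σ₂) * (A0 0 0 * B0 0 0) := by
      rw [hσ₁0, hσ₂0]; ring
    rw [h01, h00] at e1
    linear_combination -e1
  have hρρ : ρ₁ * ρ₂ = 1 ∨ ρ₁ * ρ₂ = -1 := by
    rcases hΦpm with h | h
    · left
      apply mul_right_cancel₀ (hΦne 0)
      rw [hρρc, h, one_mul]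
    · right
      apply mul_right_cancel₀ (hΦne 0)
      rw [hρρc, h]; ring
  have hσσ : σ₁ * σ₂ = 1 ∨ σ₁ * σ₂ = -1 := by
    rcases hΨpm with h | h
    · left
      apply mul_right_cancel₀ (hΨne 0)
      rw [hσσc, h, one_mul]
    · right
      apply mul_right_cancel₀ (hΨne 0)
      rw [hσσc, h]; ring
  have hεε : ε₁ * ε₂ = 1 := by
    have e1 : A0 1 1 * B0 1 1 =
        (ε₁ * ε₂) * ((ρ₁ * ρ₂) * ((σ₁ * σ₂) * (A0 0 0 * B0 0 0))) := by
      rw [hε₁, hε₂]; ring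
    rw [h11, h00] at e1
    have e2 : (ε₁ * ε₂) * (Φ 1 * Ψ 1 * lam) = 1 * (Φ 1 * Ψ 1 * lam) := by
      linear_combination (-1 : ℂ) * e1 - (ε₁ * ε₂) * lam * Φ 1 * hσσc -
        (ε₁ * ε₂) * lam * (σ₁ * σ₂) * Ψ 0 * hρρc
    exact mul_right_cancel₀
      (mul_ne_zero (mul_ne_zero (hΦne 1) (hΨne 1)) hlamne) e2
  have hε₂ε₁ : ε₂ = ε₁ := by
    rcases hε₁pm with rfl | rfl <;> rcases hε₂pm with rfl | rfl
    · rfl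
    · exfalso; norm_num at hεε
    · exfalso; norm_num at hεε
    · rfl
  obtain ⟨b, ζ₁, ζ₂, hζ₁, hζ₂, hζ₁e, hζ₂e⟩ := rho_parity ρ₁ ρ₂ hρ₁U hρ₂U hρρ
  obtain ⟨c, η₁, η₂, hη₁, hη₂, hη₁e, hη₂e⟩ := rho_parity σ₁ σ₂ hσ₁U hσ₂U hσσ
  obtain ⟨a, haval⟩ : ∃ a : Fin 2, ((-1 : ℂ)) ^ (a : ℕ) = ε₁ := by
    rcases hε₁pm with rfl | rfl
    · exact ⟨0, by norm_num⟩
    · exact ⟨1, by norm_num⟩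
  refine ⟨a, b, c, ?_⟩
  obtain ⟨P₁, hP₁, ω₁, hω₁, hω₁e⟩ := pauli_match sA ζ₁ hζ₁
  obtain ⟨P₁', hP₁', ω₁', hω₁', hω₁e'⟩ := pauli_match rA η₁ hη₁
  obtain ⟨P₂, hP₂, ω₂, hω₂, hω₂e⟩ := pauli_match sB ζ₂ hζ₂
  obtain ⟨P₂', hP₂', ω₂', hω₂', hω₂e'⟩ := pauli_match rB η₂ hη₂
  have habs1 : ‖A0 0 0‖ = 1 := abs_one_of_conj_mul (hinv1 0 0)
  have habs2 : ‖B0 0 0‖ = 1 := abs_one_of_conj_mul (hinv2 0 0)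
  refine ⟨P₁, hP₁, P₁', hP₁', P₂, hP₂, P₂', hP₂',
    A0 0 0 * (ω₁ * ω₁'), B0 0 0 * (ω₂ * ω₂'), ?_, ?_, ?_, ?_⟩
  · rw [norm_mul, norm_mul, habs1, hω₁, hω₁']; norm_num
  · rw [norm_mul, norm_mul, habs2, hω₂, hω₂']; norm_num
  · -- g₁ equation
    rw [dd_eq]
    ext p q
    rw [Matrix.smul_apply, Matrix.mul_diagonal, hstruct1 p q, smul_eq_mul]
    have hrear : A0 0 0 * (ω₁ * ω₁') * (kron2 P₁ P₁' p q * ddfun a b c q) =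
        (A0 0 0 * ddfun a b c q) * ((ω₁ * P₁ p.1 q.1) * (ω₁' * P₁' p.2 q.2)) := by
      show A0 0 0 * (ω₁ * ω₁') * ((P₁ p.1 q.1 * P₁' p.2 q.2) * ddfun a b c q) = _
      ring
    rw [hrear, ← hω₁e p.1 q.1, ← hω₁e' p.2 q.2]
    obtain ⟨x, y⟩ := q
    obtain ⟨a', c'⟩ := p
    by_cases h1 : a' = x + sA <;> by_cases h2 : c' = y + rA
    · rw [if_pos h1, if_pos h2, if_pos (by rw [h1, h2])]
      rcases fin2_cases x with rfl | rfl <;> rcases fin2_cases y with rfl | rfl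
      · simp [ddfun]
      · show A0 0 1 * 1 = _
        rw [hσ₁0, hη₁e]
        simp [ddfun]
        ring
      · show A0 1 0 * 1 = _
        rw [hρ₁0, hζ₁e]
        simp [ddfun]
        ring
      · show A0 1 1 * 1 = _
        rw [hε₁, hζ₁e, hη₁e, ← haval]
        simp [ddfun]
        ring
    · rw [if_pos h1, if_neg h2, if_neg (fun hc => h2 (congrArg Prod.snd hc))]; ring
    · rw [if_neg h1, if_neg (fun hc => h1 (congrArg Prod.fst hc))]; ring
    · rw [if_neg h1, if_neg (fun hc => h1 (congrArg Prod.fst hc))]; ring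
  · -- g₂ equation
    rw [dd_eq]
    ext p q
    rw [Matrix.smul_apply, Matrix.mul_diagonal, hstruct2 p q, smul_eq_mul]
    have hrear : B0 0 0 * (ω₂ * ω₂') * (kron2 P₂ P₂' p q * ddfun a b c q) =
        (B0 0 0 * ddfun a b c q) * ((ω₂ * P₂ p.1 q.1) * (ω₂' * P₂' p.2 q.2)) := by
      show B0 0 0 * (ω₂ * ω₂') * ((P₂ p.1 q.1 * P₂' p.2 q.2) * ddfun a b c q) = _
      ring
    rw [hrear, ← hω₂e p.1 q.1, ← hω₂e' p.2 q.2]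
    obtain ⟨x, y⟩ := q
    obtain ⟨a', c'⟩ := p
    by_cases h1 : a' = x + sB <;> by_cases h2 : c' = y + rB
    · rw [if_pos h1, if_pos h2, if_pos (by rw [h1, h2])]
      rcases fin2_cases x with rfl | rfl <;> rcases fin2_cases y with rfl | rfl
      · simp [ddfun]
      · show B0 0 1 * 1 = _
        rw [hσ₂0, hη₂e]
        simp [ddfun]
        ring
      · show B0 1 0 * 1 = _
        rw [hρ₂0, hζ₂e]
        simp [ddfun]
        ring
      · show B0 1 1 * 1 = _
        rw [hε₂, hε₂ε₁, hζ₂e, hη₂e, ← haval]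
        simp [ddfun]
        ring
    · rw [if_pos h1, if_neg h2, if_neg (fun hc => h2 (congrArg Prod.snd hc))]; ring
    · rw [if_neg h1, if_neg (fun hc => h1 (congrArg Prod.fst hc))]; ring
    · rw [if_neg h1, if_neg (fun hc => h1 (congrArg Prod.fst hc))]; ring

end
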